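/- For a finite MDP, the Blackwell discount factor γ_bw satisfies γ_bw ≤ γ_Q, where γ_Q is the supremum over all policies π, states s, and action pairs (a, a') of the infimum of γ ∈ [0,1) such that the strict ordering Q^π_τ(s,a) > Q^π_τ(s,a') is invariant for all τ ∈ (γ, 1). Moreover γ_Q exists (i.e., γ_Q < 1) for every finite MDP. -/

import Mathlib

open Matrix Set

/-- A finite MDP with state space `S` and action space `A`. -/
structure FinMDP (S A : Type) [Fintype S] where
  T : S → A → S → ℝ
  R : S → A → ℝ
  T_nonneg : ∀ s a s', 0 ≤ T s a s'
  T_sum_one : ∀ s a, ∑ s', T s a s' = 1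

/-- The discounted value vector of a (deterministic stationary) policy `π`:
`v = (I - γ Pᵖ)⁻¹ rᵖ`. -/
noncomputable def FinMDP.val {S A : Type} [Fintype S] [DecidableEq S]
    (M : FinMDP S A) (π : S → A) (γ : ℝ) : S → ℝ :=
  ((1 : Matrix S S ℝ) - γ • Matrix.of fun s s' => M.T s (π s) s')⁻¹ *ᵥ
    fun s => M.R s (π s)

/-- The action-value (Q-) function of a policy. -/
noncomputable def FinMDP.Q {S A : Type} [Fintype S] [DecidableEq S]
    (M : FinMDP S A) (π : S → A) (γ : ℝ) (s : S) (a : A) : ℝ :=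
  M.R s a + γ * ∑ s', M.T s a s' * M.val π γ s'

/-- The set of discount-optimal policies at discount factor `γ`. -/
def FinMDP.discOpt {S A : Type} [Fintype S] [DecidableEq S]
    (M : FinMDP S A) (γ : ℝ) : Set (S → A) :=
  {π | ∀ (π' : S → A) (s : S), M.val π' γ s ≤ M.val π γ s}

/-- The set of Blackwell-optimal policies. -/
def FinMDP.blackwellOpt {S A : Type} [Fintype S] [DecidableEq S]
    (M : FinMDP S A) : Set (S → A) :=
  {π | ∃ γ' ∈ Ico (0 : ℝ) 1, ∀ γ ∈ Ioo γ' 1, π ∈ M.discOpt γ}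

/-- The Blackwell discount factor `γ_bw`: the infimum of `γ ∈ [0,1)` beyond which
the discount-optimal policies are exactly the Blackwell-optimal policies. -/
noncomputable def FinMDP.gammaBw {S A : Type} [Fintype S] [DecidableEq S]
    (M : FinMDP S A) : ℝ :=
  sInf {γ ∈ Ico (0 : ℝ) 1 | ∀ γ' ∈ Ioo γ 1, M.discOpt γ' = M.blackwellOpt}

/-- The Q-ordering threshold `γ_Q`: the supremum over policies `π`, states `s`, and
action pairs `(a,a')` of the infimum of `γ ∈ [0,1)` such that the strict ordering of
`Q^π_τ(s,a)` and `Q^π_τ(s,a')` is invariant for all `τ ∈ (γ,1)`. -/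
noncomputable def FinMDP.gammaQ {S A : Type} [Fintype S] [DecidableEq S]
    (M : FinMDP S A) : ℝ :=
  sSup {x | ∃ (π : S → A) (s : S) (a a' : A),
    x = sInf {γ ∈ Ico (0 : ℝ) 1 | ∀ τ ∈ Ioo γ 1, ∀ τ' ∈ Ioo γ 1,
      (M.Q π τ s a' < M.Q π τ s a ↔ M.Q π τ' s a' < M.Q π τ' s a)}}

/-! ### Auxiliary lemmas -/

section Aux

set_option linter.unusedSectionVars false

variable {S A : Type} [Fintype S] [DecidableEq S] [Nonempty S]

open Polynomial

private lemma det_ne (P : Matrix S S ℝ) (hP0 : ∀ i j, 0 ≤ P i j)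
    (hP1 : ∀ i, ∑ j, P i j = 1) {γ : ℝ} (h0 : 0 ≤ γ) (h1 : γ < 1) :
    ((1 : Matrix S S ℝ) - γ • P).det ≠ 0 := by
  intro hdet
  obtain ⟨v, hv, hAv⟩ := Matrix.exists_mulVec_eq_zero_iff.2 hdet
  have hcomp : ∀ s, v s = γ * ∑ s', P s s' * v s' := by
    intro s
    have h := congrFun hAv s
    rw [Matrix.sub_mulVec, Matrix.one_mulVec, Matrix.smul_mulVec] at h
    have : v s - γ * ∑ s', P s s' * v s' = 0 := by
      simpa [Matrix.mulVec, dotProduct, Finset.mul_sum] using h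
    linarith
  obtain ⟨s₀, -, hs₀⟩ := Finset.exists_max_image Finset.univ (fun s => |v s|)
    ⟨Classical.arbitrary S, Finset.mem_univ _⟩
  have hpos : 0 < |v s₀| := by
    obtain ⟨s, hs⟩ := Function.ne_iff.1 hv
    exact lt_of_lt_of_le (abs_pos.2 hs) (hs₀ s (Finset.mem_univ s))
  have : |v s₀| ≤ γ * |v s₀| := by
    calc |v s₀| = |γ * ∑ s', P s₀ s' * v s'| := by rw [← hcomp]
    _ = γ * |∑ s', P s₀ s' * v s'| := by rw [abs_mul, abs_of_nonneg h0]
    _ ≤ γ * ∑ s', P s₀ s' * |v s'| := by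
        gcongr
        exact (Finset.abs_sum_le_sum_abs _ _).trans (le_of_eq (by
          refine Finset.sum_congr rfl fun s' _ => ?_
          rw [abs_mul, abs_of_nonneg (hP0 _ _)]))
    _ ≤ γ * ∑ s', P s₀ s' * |v s₀| := by
        apply mul_le_mul_of_nonneg_left _ h0
        exact Finset.sum_le_sum fun s' _ =>
          mul_le_mul_of_nonneg_left (hs₀ s' (Finset.mem_univ _)) (hP0 _ _)
    _ = γ * |v s₀| := by rw [← Finset.sum_mul, hP1]; ring
  nlinarith

private lemma mono_aux (P : Matrix S S ℝ) (hP0 : ∀ i j, 0 ≤ P i j)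
    (hP1 : ∀ i, ∑ j, P i j = 1) {γ : ℝ} (h0 : 0 ≤ γ) (h1 : γ < 1)
    (u w : S → ℝ) (huw : ∀ s, u s = w s + γ * ∑ s', P s s' * u s')
    (hw : ∀ s, 0 ≤ w s) : ∀ s, w s ≤ u s := by
  have hu : ∀ s, 0 ≤ u s := by
    by_contra hcon
    push_neg at hcon
    obtain ⟨s₀, -, hs₀⟩ := Finset.exists_min_image Finset.univ u
      ⟨Classical.arbitrary S, Finset.mem_univ _⟩
    have hneg : u s₀ < 0 := by
      obtain ⟨s, hs⟩ := hcon
      exact lt_of_le_of_lt (hs₀ s (Finset.mem_univ s)) hs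
    have : γ * u s₀ ≤ u s₀ := by
      calc γ * u s₀ = 0 + γ * ∑ s', P s₀ s' * u s₀ := by
            rw [← Finset.sum_mul, hP1]; ring
      _ ≤ w s₀ + γ * ∑ s', P s₀ s' * u s' := by
            apply add_le_add (by simpa using hw s₀)
            apply mul_le_mul_of_nonneg_left _ h0
            exact Finset.sum_le_sum fun s' _ =>
              mul_le_mul_of_nonneg_left (hs₀ s' (Finset.mem_univ _)) (hP0 _ _)
      _ = u s₀ := (huw s₀).symm
    nlinarith
  intro s
  have : 0 ≤ γ * ∑ s', P s s' * u s' := by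
    apply mul_nonneg h0
    exact Finset.sum_nonneg fun s' _ => mul_nonneg (hP0 _ _) (hu s')
  linarith [huw s]

private lemma sign_stable (f : ℝ → ℝ) (p q : Polynomial ℝ)
    (h : ∀ γ ∈ Ico (0:ℝ) 1, q.eval γ ≠ 0 ∧ f γ = p.eval γ / q.eval γ) :
    ∃ γ₀ ∈ Ico (0:ℝ) 1, ∀ τ ∈ Ioo γ₀ 1, ∀ τ' ∈ Ioo γ₀ 1, (0 < f τ ↔ 0 < f τ') := by
  rcases eq_or_ne p 0 with hp | hp
  · refine ⟨0, by norm_num, fun τ hτ τ' hτ' => ?_⟩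
    have hfτ : f τ = 0 := by
      rw [(h τ ⟨le_of_lt hτ.1, hτ.2⟩).2, hp]; simp
    have hfτ' : f τ' = 0 := by
      rw [(h τ' ⟨le_of_lt hτ'.1, hτ'.2⟩).2, hp]; simp
    simp [hfτ, hfτ']
  · have hq : q ≠ 0 := fun h0 => (h 0 (by norm_num)).1 (by simp [h0])
    have hpq : p * q ≠ 0 := mul_ne_zero hp hq
    set rts := ((p*q).roots.toFinset.filter (· < 1)) with hrts
    set F := insert (0:ℝ) rts with hF
    have hFne : F.Nonempty := Finset.insert_nonempty _ _
    set γ₀ : ℝ := F.max' hFne with hγ₀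
    have hγ₀0 : 0 ≤ γ₀ := Finset.le_max' F 0 (Finset.mem_insert_self _ _)
    have hγ₀1 : γ₀ < 1 := by
      have hm : γ₀ ∈ F := Finset.max'_mem F hFne
      rw [hF, Finset.mem_insert] at hm
      rcases hm with hm | hm
      · rw [hm]; norm_num
      · simpa using (Finset.mem_filter.1 hm).2
    have hIoo : ∀ τ ∈ Ioo γ₀ 1, τ ∈ Ico (0:ℝ) 1 := fun τ hτ =>
      ⟨le_trans hγ₀0 (le_of_lt hτ.1), hτ.2⟩
    have hne : ∀ τ ∈ Ioo γ₀ 1, f τ ≠ 0 := by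
      intro τ hτ hf0
      have hqτ := (h τ (hIoo τ hτ)).1
      have hpτ : p.eval τ = 0 := by
        have := (h τ (hIoo τ hτ)).2
        rw [hf0] at this
        field_simp at this
        linarith
      have : τ ∈ rts := by
        rw [hrts]
        refine Finset.mem_filter.2 ⟨Multiset.mem_toFinset.2 ?_, by simpa using hτ.2⟩
        rw [Polynomial.mem_roots hpq]
        simp [hpτ]
      have : τ ≤ γ₀ := Finset.le_max' F τ (Finset.mem_insert_of_mem this)
      linarith [hτ.1]
    have key : ∀ τ ∈ Ioo γ₀ 1, ∀ τ' ∈ Ioo γ₀ 1, 0 < f τ → 0 < f τ' := by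
      intro τ hτ τ' hτ' hfτ
      by_contra hcon
      have hfτ' : f τ' < 0 := lt_of_le_of_ne (not_lt.1 hcon) (hne τ' hτ')
      have hcont : ∀ a b : ℝ, a ∈ Ioo γ₀ 1 → b ∈ Ioo γ₀ 1 → a ≤ b →
          ContinuousOn f (Icc a b) := by
        intro a b ha hb hab
        have hsub : Icc a b ⊆ Ico (0:ℝ) 1 := fun x hx =>
          ⟨le_trans (hIoo a ha).1 hx.1, lt_of_le_of_lt hx.2 hb.2⟩
        exact (((p.continuous_aeval ..).continuousOn.div
          (q.continuous_aeval ..).continuousOn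
          (fun x hx => (h x (hsub hx)).1)).congr
          (fun x hx => (h x (hsub hx)).2))
      rcases le_total τ τ' with hle | hle
      · obtain ⟨x, hx, hfx⟩ := intermediate_value_Icc' hle (hcont τ τ' hτ hτ' hle)
          (⟨le_of_lt hfτ', le_of_lt hfτ⟩ : (0:ℝ) ∈ Icc (f τ') (f τ))
        exact hne x ⟨lt_of_lt_of_le hτ.1 hx.1, lt_of_le_of_lt hx.2 hτ'.2⟩ hfx
      · obtain ⟨x, hx, hfx⟩ := intermediate_value_Icc hle (hcont τ' τ hτ' hτ hle)
          (⟨le_of_lt hfτ', le_of_lt hfτ⟩ : (0:ℝ) ∈ Icc (f τ') (f τ))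
        exact hne x ⟨lt_of_lt_of_le hτ'.1 hx.1, lt_of_le_of_lt hx.2 hτ.2⟩ hfx
    exact ⟨γ₀, ⟨hγ₀0, hγ₀1⟩, fun τ hτ τ' hτ' =>
      ⟨key τ hτ τ' hτ', key τ' hτ' τ hτ⟩⟩

private lemma FinMDP.bellman (M : FinMDP S A) (π : S → A) {γ : ℝ} (h0 : 0 ≤ γ) (h1 : γ < 1)
    (s : S) : M.val π γ s = M.R s (π s) + γ * ∑ s', M.T s (π s) s' * M.val π γ s' := by
  set P : Matrix S S ℝ := Matrix.of fun s s' => M.T s (π s) s' with hP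
  set Amat := (1 : Matrix S S ℝ) - γ • P with hA
  have hdet : Amat.det ≠ 0 :=
    det_ne P (fun i j => M.T_nonneg _ _ _) (fun i => M.T_sum_one _ _) h0 h1
  have hunit : IsUnit Amat.det := isUnit_iff_ne_zero.2 hdet
  have hAv : Amat *ᵥ M.val π γ = fun s => M.R s (π s) := by
    rw [FinMDP.val, Matrix.mulVec_mulVec, Matrix.mul_nonsing_inv _ hunit, Matrix.one_mulVec]
  have h := congrFun hAv s
  rw [hA, Matrix.sub_mulVec, Matrix.one_mulVec, Matrix.smul_mulVec] at h
  have : M.val π γ s - γ * ∑ s', M.T s (π s) s' * M.val π γ s' = M.R s (π s) := by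
    simpa [Matrix.mulVec, dotProduct, Finset.mul_sum, hP] using h
  linarith

private lemma FinMDP.val_eq_Q (M : FinMDP S A) (π : S → A) {γ : ℝ} (h0 : 0 ≤ γ) (h1 : γ < 1)
    (s : S) : M.val π γ s = M.Q π γ s (π s) :=
  M.bellman π h0 h1 s

private lemma FinMDP.val_rat (M : FinMDP S A) (π : S → A) :
    ∃ (p : S → Polynomial ℝ) (q : Polynomial ℝ),
      ∀ γ ∈ Ico (0:ℝ) 1, q.eval γ ≠ 0 ∧ ∀ s, M.val π γ s = (p s).eval γ / q.eval γ := by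
  set P : Matrix S S ℝ := Matrix.of fun s s' => M.T s (π s) s' with hP
  set N : Matrix S S (Polynomial ℝ) := 1 - (X : Polynomial ℝ) • P.map C with hN
  refine ⟨fun s => ∑ s', N.adjugate s s' * C (M.R s' (π s')), N.det, ?_⟩
  intro γ hγ
  have hmap : (evalRingHom γ).mapMatrix N = (1 : Matrix S S ℝ) - γ • P := by
    ext i j
    simp only [RingHom.mapMatrix_apply, Matrix.map_apply, hN, Matrix.sub_apply,
      Matrix.smul_apply, Matrix.one_apply, smul_eq_mul]
    by_cases hij : i = j <;> · simp [hij, coe_evalRingHom]; ring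
  have hdetN : N.det.eval γ = ((1 : Matrix S S ℝ) - γ • P).det := by
    have := RingHom.map_det (evalRingHom γ) N
    rw [hmap] at this
    simpa using this
  have hdet : ((1 : Matrix S S ℝ) - γ • P).det ≠ 0 :=
    det_ne P (fun i j => M.T_nonneg _ _ _) (fun i => M.T_sum_one _ _) hγ.1 hγ.2
  refine ⟨by rw [hdetN]; exact hdet, fun s => ?_⟩
  have hadj : ∀ i j, (N.adjugate i j).eval γ = ((1 : Matrix S S ℝ) - γ • P).adjugate i j := by
    intro i j
    have := RingHom.map_adjugate (evalRingHom γ) N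
    rw [hmap] at this
    have := congrFun (congrFun (congrArg (fun (M : Matrix S S ℝ) => (M : S → S → ℝ)) this) i) j
    simpa using this
  have hinv : ((1 : Matrix S S ℝ) - γ • P)⁻¹ =
      (((1 : Matrix S S ℝ) - γ • P).det)⁻¹ • ((1 : Matrix S S ℝ) - γ • P).adjugate := by
    rw [Matrix.inv_def, Ring.inverse_eq_inv']
  rw [FinMDP.val, hinv, Matrix.smul_mulVec]
  simp only [Pi.smul_apply, smul_eq_mul]
  rw [eval_finset_sum, hdetN, div_eq_inv_mul]
  congr 1
  simp only [Matrix.mulVec, dotProduct]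
  refine Finset.sum_congr rfl fun s' _ => ?_
  rw [eval_mul, eval_C, hadj]

/-- The fundamental comparison identity between two policies. -/
private lemma FinMDP.diff_eq (M : FinMDP S A) (π π' : S → A) {γ : ℝ} (h0 : 0 ≤ γ) (h1 : γ < 1)
    (s : S) :
    M.val π' γ s - M.val π γ s = (M.Q π γ s (π' s) - M.val π γ s) +
      γ * ∑ s', M.T s (π' s) s' * (M.val π' γ s' - M.val π γ s') := by
  have hb := M.bellman π' h0 h1 s
  rw [FinMDP.Q]
  rw [hb]
  rw [Finset.sum_congr rfl (fun s' _ => mul_sub (M.T s (π' s) s') (M.val π' γ s') (M.val π γ s'))]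
  rw [Finset.sum_sub_distrib]
  ring

private lemma FinMDP.improve_le (M : FinMDP S A) (π π' : S → A) {γ : ℝ}
    (h0 : 0 ≤ γ) (h1 : γ < 1)
    (h : ∀ s, M.Q π γ s (π' s) ≤ M.val π γ s) : ∀ s, M.val π' γ s ≤ M.val π γ s := by
  have := mono_aux (Matrix.of fun s s' => M.T s (π' s) s')
    (fun i j => M.T_nonneg _ _ _) (fun i => M.T_sum_one _ _) h0 h1
    (fun s => M.val π γ s - M.val π' γ s) (fun s => M.val π γ s - M.Q π γ s (π' s))
    (fun s => by
      dsimp only [Matrix.of_apply]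
      rw [Finset.sum_congr rfl (fun s' _ => mul_sub (M.T s (π' s) s') (M.val π γ s') (M.val π' γ s'))]
      rw [Finset.sum_sub_distrib]
      have h2 := M.diff_eq π π' h0 h1 s
      rw [Finset.sum_congr rfl (fun s' _ => mul_sub (M.T s (π' s) s') (M.val π' γ s') (M.val π γ s'))] at h2
      rw [Finset.sum_sub_distrib] at h2
      linarith)
    (fun s => by linarith [h s])
  intro s
  have h2 := this s
  linarith [h s]

private lemma FinMDP.improve_ge (M : FinMDP S A) (π π' : S → A) {γ : ℝ}
    (h0 : 0 ≤ γ) (h1 : γ < 1)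
    (h : ∀ s, M.val π γ s ≤ M.Q π γ s (π' s)) :
    ∀ s, M.Q π γ s (π' s) - M.val π γ s ≤ M.val π' γ s - M.val π γ s := by
  exact mono_aux (Matrix.of fun s s' => M.T s (π' s) s')
    (fun i j => M.T_nonneg _ _ _) (fun i => M.T_sum_one _ _) h0 h1
    (fun s => M.val π' γ s - M.val π γ s) (fun s => M.Q π γ s (π' s) - M.val π γ s)
    (fun s => by
      dsimp only [Matrix.of_apply]
      exact M.diff_eq π π' h0 h1 s)
    (fun s => by linarith [h s])

/-- Optimality characterization via the Bellman condition on `Q`. -/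
private lemma FinMDP.discOpt_iff (M : FinMDP S A) (π : S → A) {γ : ℝ}
    (h0 : 0 ≤ γ) (h1 : γ < 1) :
    π ∈ M.discOpt γ ↔ ∀ s a, M.Q π γ s a ≤ M.val π γ s := by
  constructor
  · intro hopt s a
    by_contra hcon
    push_neg at hcon
    set π' := Function.update π s a with hπ'
    have hge : ∀ s', M.val π γ s' ≤ M.Q π γ s' (π' s') := by
      intro s'
      by_cases hs : s' = s
      · subst hs
        rw [hπ', Function.update_self]
        exact le_of_lt hcon
      · rw [hπ', Function.update_of_ne hs]
        exact le_of_eq (M.val_eq_Q π h0 h1 s')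
    have := M.improve_ge π π' h0 h1 hge s
    rw [hπ', Function.update_self] at this
    have hle := hopt π' s
    linarith
  · intro h π' s
    exact M.improve_le π π' h0 h1 (fun s' => h s' (π' s')) s

/-- Rationality of Q-differences. -/
private lemma FinMDP.Qdiff_rat (M : FinMDP S A) (π : S → A) (s : S) (a a' : A) :
    ∃ (p q : Polynomial ℝ), ∀ γ ∈ Ico (0:ℝ) 1, q.eval γ ≠ 0 ∧
      M.Q π γ s a - M.Q π γ s a' = p.eval γ / q.eval γ := by
  obtain ⟨pv, qv, hv⟩ := M.val_rat π
  refine ⟨C (M.R s a - M.R s a') * qv +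
    X * ∑ s', C (M.T s a s' - M.T s a' s') * pv s', qv, fun γ hγ => ?_⟩
  obtain ⟨hq, hval⟩ := hv γ hγ
  refine ⟨hq, ?_⟩
  rw [eq_div_iff hq]
  simp only [FinMDP.Q, hval]
  simp only [eval_add, eval_mul, eval_C, eval_X, eval_finset_sum]
  simp only [← mul_div_assoc, ← Finset.sum_div]
  simp only [sub_mul, Finset.sum_sub_distrib]
  field_simp
  ring

end Aux

/-- **`γ_bw ≤ γ_Q`, and `γ_Q` exists (is `< 1`) for every finite MDP.** -/
theorem gammaBw_le_gammaQ
    (S A : Type) [Fintype S] [DecidableEq S] [Nonempty S] [Fintype A] [Nonempty A]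
    (M : FinMDP S A) :
    M.gammaBw ≤ M.gammaQ ∧ M.gammaQ < 1 := by
  classical
  -- the per-tuple invariance sets
  set G : (S → A) → S → A → A → Set ℝ := fun π s a a' =>
    {γ ∈ Ico (0 : ℝ) 1 | ∀ τ ∈ Ioo γ 1, ∀ τ' ∈ Ioo γ 1,
      (M.Q π τ s a' < M.Q π τ s a ↔ M.Q π τ' s a' < M.Q π τ' s a)} with hG
  -- each G is nonempty: sign stability of rational Q-differences
  have hGne : ∀ π s a a', ∃ γ₀ ∈ Ico (0:ℝ) 1, γ₀ ∈ G π s a a' := by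
    intro π s a a'
    obtain ⟨p, q, hpq⟩ := M.Qdiff_rat π s a a'
    obtain ⟨γ₀, hγ₀, hstab⟩ := sign_stable (fun γ => M.Q π γ s a - M.Q π γ s a') p q hpq
    refine ⟨γ₀, hγ₀, hγ₀, fun τ hτ τ' hτ' => ?_⟩
    have := hstab τ hτ τ' hτ'
    simpa [sub_pos] using this
  -- G is upward closed within [0,1)
  have hGup : ∀ π s a a', ∀ γ ∈ G π s a a', ∀ γ'' , γ ≤ γ'' → γ'' < 1 → γ'' ∈ G π s a a' := by
    intro π s a a' γ hγ γ'' hle h1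
    exact ⟨⟨le_trans hγ.1.1 hle, h1⟩, fun τ hτ τ' hτ' =>
      hγ.2 τ ⟨lt_of_le_of_lt hle hτ.1, hτ.2⟩ τ' ⟨lt_of_le_of_lt hle hτ'.1, hτ'.2⟩⟩
  have hGbdd : ∀ π s a a', BddBelow (G π s a a') :=
    fun π s a a' => ⟨0, fun x hx => hx.1.1⟩
  -- uniform bound γ₀ < 1 over all tuples
  have hchoice : ∀ t : (S → A) × S × A × A, ∃ γ₀ ∈ Ico (0:ℝ) 1, γ₀ ∈ G t.1 t.2.1 t.2.2.1 t.2.2.2 :=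
    fun t => hGne t.1 t.2.1 t.2.2.1 t.2.2.2
  choose g₀ hg₀Ico hg₀G using hchoice
  have hTne : (Finset.univ : Finset ((S → A) × S × A × A)).Nonempty :=
    ⟨(Classical.arbitrary _), Finset.mem_univ _⟩
  set γ₀ : ℝ := Finset.univ.sup' hTne g₀ with hγ₀def
  have hγ₀1 : γ₀ < 1 := by
    rw [hγ₀def, Finset.sup'_lt_iff]
    exact fun t _ => (hg₀Ico t).2
  have hγ₀0 : 0 ≤ γ₀ := le_trans (hg₀Ico (Classical.arbitrary _)).1
    (Finset.le_sup' g₀ (Finset.mem_univ _))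
  -- the set defining gammaQ
  set Xset : Set ℝ := {x | ∃ (π : S → A) (s : S) (a a' : A),
    x = sInf (G π s a a')} with hXset
  have hXsub : ∀ x ∈ Xset, 0 ≤ x ∧ x ≤ γ₀ := by
    rintro x ⟨π, s, a, a', rfl⟩
    constructor
    · exact Real.sInf_nonneg (fun y hy => hy.1.1)
    · calc sInf (G π s a a') ≤ g₀ (π, s, a, a') :=
            csInf_le (hGbdd π s a a') (hg₀G (π, s, a, a'))
      _ ≤ γ₀ := Finset.le_sup' g₀ (Finset.mem_univ _)
  have hXne : Xset.Nonempty := by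
    obtain ⟨π, s, a, a'⟩ := Classical.arbitrary ((S → A) × S × A × A)
    exact ⟨_, π, s, a, a', rfl⟩
  have hgQ : M.gammaQ = sSup Xset := rfl
  have hgQ1 : M.gammaQ < 1 := by
    rw [hgQ]
    exact lt_of_le_of_lt (Real.sSup_le (fun x hx => (hXsub x hx).2) hγ₀0) hγ₀1
  have hgQ0 : 0 ≤ M.gammaQ := by
    rw [hgQ]
    exact Real.sSup_nonneg (fun x hx => (hXsub x hx).1)
  -- Q-order invariance on (γ_Q, 1)
  have hinv : ∀ γ₁ ∈ Ioo M.gammaQ 1, ∀ γ₂ ∈ Ioo M.gammaQ 1, ∀ (π : S → A) (s : S) (a a' : A),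
      (M.Q π γ₁ s a' < M.Q π γ₁ s a ↔ M.Q π γ₂ s a' < M.Q π γ₂ s a) := by
    intro γ₁ hγ₁ γ₂ hγ₂ π s a a'
    have hle : sInf (G π s a a') ≤ M.gammaQ := by
      rw [hgQ]
      exact le_csSup ⟨γ₀, fun x hx => (hXsub x hx).2⟩ ⟨π, s, a, a', rfl⟩
    have hlt : sInf (G π s a a') < min γ₁ γ₂ :=
      lt_of_le_of_lt hle (lt_min hγ₁.1 hγ₂.1)
    obtain ⟨π₀s, s₀, a₀, a₀'⟩ := (Classical.arbitrary ((S → A) × S × A × A))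
    obtain ⟨g, hgG, hglt⟩ := (csInf_lt_iff (hGbdd π s a a')
      ⟨g₀ (π, s, a, a'), hg₀G (π, s, a, a')⟩).1 hlt
    exact hgG.2 γ₁ ⟨lt_of_lt_of_le hglt (min_le_left _ _), hγ₁.2⟩
      γ₂ ⟨lt_of_lt_of_le hglt (min_le_right _ _), hγ₂.2⟩
  -- discOpt is constant on (γ_Q, 1)
  have hdisc : ∀ γ₁ ∈ Ioo M.gammaQ 1, ∀ γ₂ ∈ Ioo M.gammaQ 1,
      M.discOpt γ₁ ⊆ M.discOpt γ₂ := by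
    intro γ₁ hγ₁ γ₂ hγ₂ π hπ
    have h10 : (0:ℝ) ≤ γ₁ := le_trans hgQ0 (le_of_lt hγ₁.1)
    have h20 : (0:ℝ) ≤ γ₂ := le_trans hgQ0 (le_of_lt hγ₂.1)
    rw [M.discOpt_iff π h10 hγ₁.2] at hπ
    rw [M.discOpt_iff π h20 hγ₂.2]
    intro s a
    have h1 : ¬ (M.Q π γ₁ s (π s) < M.Q π γ₁ s a) := by
      rw [← M.val_eq_Q π h10 hγ₁.2 s]
      exact not_lt.2 (hπ s a)
    have hiff := hinv γ₁ hγ₁ γ₂ hγ₂ π s a (π s)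
    have h2 : ¬ (M.Q π γ₂ s (π s) < M.Q π γ₂ s a) := fun hc => h1 (hiff.2 hc)
    rw [M.val_eq_Q π h20 hγ₂.2 s]
    exact not_lt.1 h2
  -- blackwellOpt = discOpt γ' for γ' ∈ (γ_Q, 1)
  have hbw : ∀ γ' ∈ Ioo M.gammaQ 1, M.discOpt γ' = M.blackwellOpt := by
    intro γ' hγ'
    apply Set.eq_of_subset_of_subset
    · intro π hπ
      exact ⟨γ', ⟨le_trans hgQ0 (le_of_lt hγ'.1), hγ'.2⟩, fun γ hγ =>
        hdisc γ' hγ' γ ⟨lt_trans hγ'.1 hγ.1, hγ.2⟩ hπ⟩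
    · rintro π ⟨γ'', hγ''Ico, h⟩
      set γ := (max γ'' γ' + 1) / 2 with hγdef
      have hmax1 : max γ'' γ' < 1 := max_lt hγ''Ico.2 hγ'.2
      have hγlt : max γ'' γ' < γ := by rw [hγdef]; linarith
      have hγ1 : γ < 1 := by rw [hγdef]; linarith
      have hπγ : π ∈ M.discOpt γ :=
        h γ ⟨lt_of_le_of_lt (le_max_left _ _) hγlt, hγ1⟩
      exact hdisc γ ⟨lt_trans hγ'.1 (lt_of_le_of_lt (le_max_right _ _) hγlt), hγ1⟩
        γ' hγ' hπγ
  -- conclude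
  constructor
  · have hmem : M.gammaQ ∈ {γ ∈ Ico (0 : ℝ) 1 |
        ∀ γ' ∈ Ioo γ 1, M.discOpt γ' = M.blackwellOpt} :=
      ⟨⟨hgQ0, hgQ1⟩, fun γ' hγ' => hbw γ' hγ'⟩
    exact csInf_le ⟨0, fun x hx => hx.1.1⟩ hmem
  · exact hgQ1
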